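/- Let Ω > 0, G ∈ ℝ, a ≥ 0, b ≥ 0, and θ_r, θ_i ∈ ℝ. Let B ∈ ℝ be arbitrary and set Y_z = [[G, −B], [B, G]] and Γ = [[0, −1/(iΩ)], [1/(iΩ), 0]]. Define the complex vector u = (iΩ·b·e^{iθ_i}, −iΩ·a·e^{iθ_r}) ∈ ℂ². Then the dissipating power satisfies Re( u* (Y_zΓ) u ) = 2·G·Ω·a·b·sin(θ_r − θ_i). In particular, the result is independent of the susceptance B, and its sign equals the sign of G·sin(θ_r − θ_i). -/

import Mathlib

open Matrix Complex

/-- With voltage perturbation phasors `Ṽ_r = a·e^{iθ_r}`,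
`Ṽ_i = b·e^{iθ_i}` and DEF-transformed input
`u = (iΩ·b·e^{iθ_i}, −iΩ·a·e^{iθ_r})`, the dissipating power of the constant
impedance load is `Re(u* (Y_zΓ) u) = 2·G·Ω·a·b·sin(θ_r − θ_i)`,
independently of the susceptance `B`. -/
theorem stmt8 (Ω : ℝ) (hΩ : 0 < Ω) (G : ℝ) (a b : ℝ) (ha : 0 ≤ a) (hb : 0 ≤ b)
    (θr θi : ℝ) (B : ℝ) :
    let Γ : Matrix (Fin 2) (Fin 2) ℂ :=
      !![0, -(1 / (Complex.I * Ω)); 1 / (Complex.I * Ω), 0]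
    let Yz : Matrix (Fin 2) (Fin 2) ℂ := !![(G : ℂ), -(B : ℂ); (B : ℂ), (G : ℂ)]
    let u : Fin 2 → ℂ :=
      ![Complex.I * Ω * b * Complex.exp (Complex.I * θi),
        -(Complex.I * Ω * a * Complex.exp (Complex.I * θr))]
    (star u ⬝ᵥ (Yz * Γ).mulVec u).re = 2 * G * Ω * a * b * Real.sin (θr - θi) := by
  intro Γ Yz u
  have hΩ' : (Complex.I * Ω) ≠ 0 := by
    simp [Complex.ext_iff, hΩ.ne']
  simp only [Γ, Yz, u, dotProduct, mulVec, Matrix.mul_apply, Fin.sum_univ_two,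
    Matrix.cons_val_zero, Matrix.cons_val_one, Matrix.head_cons, Matrix.head_fin_const,
    Pi.star_apply, star_def, Matrix.cons_val', Matrix.empty_val', Matrix.cons_val_fin_one, Matrix.of_apply]
  field_simp
  rw [mul_comm Complex.I (θi:ℂ), mul_comm Complex.I (θr:ℂ), Complex.exp_mul_I, Complex.exp_mul_I]
  simp only [← Complex.ofReal_cos, ← Complex.ofReal_sin]
  rw [Real.sin_sub]
  set ci := Real.cos θi
  set si := Real.sin θi
  set cr := Real.cos θr
  set sr := Real.sin θr
  have hI : (Complex.I)⁻¹ ^ 3 = Complex.I := by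
    simp [Complex.inv_I, pow_succ, Complex.I_mul_I]
  have hΩ0 : (Ω:ℝ) ≠ 0 := hΩ.ne'
  have hD : Complex.I * (Ω:ℂ) * (Complex.I * (Ω:ℂ)) * (Complex.I * (Ω:ℂ))
      = ((-(Ω^3) : ℝ) : ℂ) * Complex.I := by
    simp [Complex.ext_iff, ← Complex.ofReal_pow]; ring
  simp [Complex.div_re, Complex.normSq_apply, Complex.mul_re, Complex.mul_im, ← Complex.ofReal_pow]
  field_simp
  ring
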